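/- Let H be a real Hilbert space, f : H → ℝ ∪ {+∞} a proper, convex and lower semicontinuous function, B : H → H any map, x ∈ H, and γ, μ > 0. Let p ∈ H be a minimizer of y ↦ f(y) + (1/(2γ)) ‖y − (x − γ B x)‖² over H, and let q ∈ H be a minimizer of y ↦ f(y) + (1/(2μ)) ‖y − (x − μ B x)‖² over H. Then ‖p − q‖ ≤ |1 − μ/γ| ‖p − x‖. -/

import Mathlib

lemma aux_lim (A C : ℝ) (hC : 0 ≤ C) (h : ∀ t : ℝ, 0 < t → t ≤ 1 → 0 ≤ A + t * C) :
    0 ≤ A := by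
  by_contra hA
  push_neg at hA
  rcases eq_or_lt_of_le hC with hC0 | hC0
  · have := h 1 one_pos le_rfl; nlinarith
  · have htpos : 0 < min 1 (-A / (2 * C)) :=
      lt_min one_pos (div_pos (by linarith) (by linarith))
    have h1 := h _ htpos (min_le_left _ _)
    have h2 : min 1 (-A / (2 * C)) * C ≤ (-A / (2 * C)) * C :=
      mul_le_mul_of_nonneg_right (min_le_right _ _) hC
    have h3 : (-A / (2 * C)) * C = -A / 2 := by field_simp
    nlinarith

lemma prox_vi {H : Type*} [NormedAddCommGroup H] [InnerProductSpace ℝ H]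
    (f : H → EReal)
    (hconv : ∀ z w : H, ∀ t : ℝ, 0 ≤ t → t ≤ 1 →
      f (t • z + (1 - t) • w) ≤ (t : EReal) * f z + ((1 - t : ℝ) : EReal) * f w)
    (z : H) (γ : ℝ) (hγ : 0 < γ) (p : H) (a : ℝ) (hfp : f p = (a : EReal))
    (hp : ∀ y : H, f p + ((1 / (2 * γ) * ‖p - z‖ ^ 2 : ℝ) : EReal) ≤
      f y + ((1 / (2 * γ) * ‖y - z‖ ^ 2 : ℝ) : EReal))
    (y : H) (b : ℝ) (hfy : f y = (b : EReal)) :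
    (inner ℝ (z - p) (y - p) : ℝ) ≤ γ * (b - a) := by
  set c : ℝ := 1 / (2 * γ) with hc
  have hcpos : 0 < c := by positivity
  set I : ℝ := (inner ℝ (p - z) (y - p) : ℝ) with hI
  set N : ℝ := ‖y - p‖ ^ 2 with hN
  have key : ∀ t : ℝ, 0 < t → t ≤ 1 → 0 ≤ ((b - a) + 2 * c * I) + t * (c * N) := by
    intro t ht0 ht1
    have h1 := hp (t • y + (1 - t) • p)
    have h2 := hconv y p t ht0.le ht1
    have h3 := le_trans h1 (add_le_add_left h2 _)
    rw [hfp, hfy] at h3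
    have h4 : (a + c * ‖p - z‖ ^ 2 : ℝ) ≤
        ((t * b + (1 - t) * a) + c * ‖t • y + (1 - t) • p - z‖ ^ 2 : ℝ) := by
      exact_mod_cast h3
    have hexp : t • y + (1 - t) • p - z = (p - z) + t • (y - p) := by
      rw [sub_smul, one_smul]; module
    rw [hexp, norm_add_sq_real, real_inner_smul_right, norm_smul, mul_pow] at h4
    simp only [Real.norm_eq_abs, sq_abs] at h4
    rw [← hI, ← hN] at h4
    have h5 : 0 ≤ t * (((b - a) + 2 * c * I) + t * (c * N)) := by nlinarith
    by_contra hX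
    push_neg at hX
    nlinarith [mul_pos ht0 (neg_pos.mpr hX)]
  have hmain := aux_lim _ _ (by positivity) key
  have hIi : (inner ℝ (z - p) (y - p) : ℝ) = -I := by
    rw [hI, ← inner_neg_left]; norm_num
  rw [hIi]
  have h2c : 2 * c * I = I / γ := by rw [hc]; field_simp
  rw [h2c] at hmain
  have h8 : 0 ≤ γ * ((b - a) + I / γ) := mul_nonneg hγ.le hmain
  have h9 : γ * (I / γ) = I := by field_simp
  rw [mul_add, h9] at h8
  linarith

/-- resolvent-type identity for proximal points with two step sizes. -/
theorem stmt_10 {H : Type*} [NormedAddCommGroup H] [InnerProductSpace ℝ H] [CompleteSpace H]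
    (f : H → EReal)
    (hproper : ∃ z : H, f z ≠ ⊤) (hreal : ∀ z : H, f z ≠ ⊥)
    (hconv : ∀ z w : H, ∀ t : ℝ, 0 ≤ t → t ≤ 1 →
      f (t • z + (1 - t) • w) ≤ (t : EReal) * f z + ((1 - t : ℝ) : EReal) * f w)
    (hlsc : LowerSemicontinuous f)
    (B : H → H) (x : H) (γ μ : ℝ) (hγ : 0 < γ) (hμ : 0 < μ)
    (p q : H)
    (hp : ∀ y : H,
      f p + ((1 / (2 * γ) * ‖p - (x - γ • B x)‖ ^ 2 : ℝ) : EReal) ≤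
      f y + ((1 / (2 * γ) * ‖y - (x - γ • B x)‖ ^ 2 : ℝ) : EReal))
    (hq : ∀ y : H,
      f q + ((1 / (2 * μ) * ‖q - (x - μ • B x)‖ ^ 2 : ℝ) : EReal) ≤
      f y + ((1 / (2 * μ) * ‖y - (x - μ • B x)‖ ^ 2 : ℝ) : EReal)) :
    ‖p - q‖ ≤ |1 - μ / γ| * ‖p - x‖ := by
  obtain ⟨z₀, hz₀⟩ := hproper
  obtain ⟨c₀, hc₀⟩ : ∃ c₀ : ℝ, f z₀ = (c₀ : EReal) :=
    ⟨(f z₀).toReal, (EReal.coe_toReal hz₀ (hreal z₀)).symm⟩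
  have hfp_ne_top : f p ≠ ⊤ := by
    intro h
    have h1 := hp z₀
    rw [h, hc₀, EReal.top_add_coe, ← EReal.coe_add] at h1
    exact not_le.mpr (EReal.coe_lt_top _) h1
  have hfq_ne_top : f q ≠ ⊤ := by
    intro h
    have h1 := hq z₀
    rw [h, hc₀, EReal.top_add_coe, ← EReal.coe_add] at h1
    exact not_le.mpr (EReal.coe_lt_top _) h1
  obtain ⟨a, ha⟩ : ∃ a : ℝ, f p = (a : EReal) :=
    ⟨(f p).toReal, (EReal.coe_toReal hfp_ne_top (hreal p)).symm⟩
  obtain ⟨b, hb⟩ : ∃ b : ℝ, f q = (b : EReal) :=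
    ⟨(f q).toReal, (EReal.coe_toReal hfq_ne_top (hreal q)).symm⟩
  have vi1 : (inner ℝ ((x - γ • B x) - p) (q - p) : ℝ) ≤ γ * (b - a) :=
    prox_vi f hconv _ γ hγ p a ha hp q b hb
  have vi2 : (inner ℝ ((x - μ • B x) - q) (p - q) : ℝ) ≤ μ * (a - b) :=
    prox_vi f hconv _ μ hμ q b hb hq p a ha
  have vi1' : (inner ℝ ((μ / γ) • ((x - γ • B x) - p)) (q - p) : ℝ) ≤ μ * (b - a) := by
    rw [real_inner_smul_left]
    have h := mul_le_mul_of_nonneg_left vi1 (le_of_lt (div_pos hμ hγ))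
    calc (μ / γ) * (inner ℝ ((x - γ • B x) - p) (q - p) : ℝ) ≤ (μ / γ) * (γ * (b - a)) := h
      _ = μ * (b - a) := by field_simp
  have hsum : (inner ℝ ((μ / γ) • ((x - γ • B x) - p) - ((x - μ • B x) - q)) (q - p) : ℝ) ≤ 0 := by
    rw [inner_sub_left]
    have hneg : (inner ℝ ((x - μ • B x) - q) (q - p) : ℝ)
        = -(inner ℝ ((x - μ • B x) - q) (p - q) : ℝ) := by
      rw [← inner_neg_right]; norm_num
    rw [hneg]
    linarith
  have hvec : (μ / γ) • ((x - γ • B x) - p) - ((x - μ • B x) - q) =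
      (1 - μ / γ) • (p - x) + (q - p) := by
    have hγ0 : γ ≠ 0 := ne_of_gt hγ
    match_scalars <;> field_simp <;> ring
  rw [hvec, inner_add_left, real_inner_smul_left] at hsum
  have hqp : (inner ℝ (q - p) (q - p) : ℝ) = ‖q - p‖ ^ 2 := real_inner_self_eq_norm_sq _
  rw [hqp] at hsum
  have hCS : |(inner ℝ (p - x) (q - p) : ℝ)| ≤ ‖p - x‖ * ‖q - p‖ := abs_real_inner_le_norm _ _
  have hkey : ‖q - p‖ ^ 2 ≤ |1 - μ / γ| * (‖p - x‖ * ‖q - p‖) := by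
    calc ‖q - p‖ ^ 2 ≤ -((1 - μ / γ) * (inner ℝ (p - x) (q - p) : ℝ)) := by linarith
      _ ≤ |(1 - μ / γ) * (inner ℝ (p - x) (q - p) : ℝ)| := neg_le_abs _
      _ = |1 - μ / γ| * |(inner ℝ (p - x) (q - p) : ℝ)| := abs_mul _ _
      _ ≤ |1 - μ / γ| * (‖p - x‖ * ‖q - p‖) :=
          mul_le_mul_of_nonneg_left hCS (abs_nonneg _)
  rw [norm_sub_rev p q]
  rcases eq_or_lt_of_le (norm_nonneg (q - p)) with h0 | h0
  · rw [← h0]; positivity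
  · rw [sq] at hkey
    have hK : |1 - μ / γ| * (‖p - x‖ * ‖q - p‖) = (|1 - μ / γ| * ‖p - x‖) * ‖q - p‖ := by ring
    rw [hK] at hkey
    exact le_of_mul_le_mul_right hkey h0
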